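/- Let Ω ⊆ ℝⁿ be a bounded open set, U an open set whose closure is compact and contained in Ω, q ∈ (0,1), c > 0, and f : ℝ → ℝ continuous with t ↦ f(t)/t^q positive and non-increasing on (0, c). Let ṽ : closure(U) → ℝ be continuous with ṽ > 0 and sup ṽ < c^{1−q}, and suppose ṽ is a viscosity supersolution in U of min{ |∇w̃| − (1−q) f(w̃^{1/(1−q)}) / w̃^{q/(1−q)}, −Δ_∞ w̃ − (q/(1−q)) |∇w̃|⁴ / w̃ } = 0. For ε > 0 set ṽ_ε := (1+ε)(ṽ + ε). Then ṽ_ε → ṽ uniformly on closure(U) as ε → 0, and for every sufficiently small ε > 0 there exists a constant C > 0 (depending on ε, q, and sup ṽ) such that sup ṽ_ε < c^{1−q} and ṽ_ε is a strict viscosity supersolution in U: for every x₀ ∈ U and every C² function φ such that ṽ_ε − φ attains a local minimum at x₀, both |∇φ(x₀)| − (1−q) f(ṽ_ε(x₀)^{1/(1−q)}) / ṽ_ε(x₀)^{q/(1−q)} ≥ C and −⟨D²φ(x₀)∇φ(x₀), ∇φ(x₀)⟩ − (q/(1−q)) |∇φ(x₀)|⁴ / ṽ_ε(x₀) ≥ C.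 -/

import Mathlib

open Real Set Metric Filter Topology

/-- `⟨D²φ(x)∇φ(x), ∇φ(x)⟩`, i.e. `Δ_∞φ(x)`. -/
noncomputable def hessQ {n : ℕ} (φ : EuclideanSpace ℝ (Fin n) → ℝ)
    (x : EuclideanSpace ℝ (Fin n)) : ℝ :=
  iteratedFDeriv ℝ 2 φ x ![gradient φ x, gradient φ x]

/-- Viscosity supersolution of `min{|∇w| − f(w), −Δ_∞ w} = 0` in `Ω`. -/
def IsFSuper {n : ℕ} (Ω : Set (EuclideanSpace ℝ (Fin n))) (f : ℝ → ℝ)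
    (w : EuclideanSpace ℝ (Fin n) → ℝ) : Prop :=
  ∀ x₀ ∈ Ω, ∀ φ : EuclideanSpace ℝ (Fin n) → ℝ, ContDiff ℝ 2 φ →
    IsLocalMinOn (fun x => w x - φ x) Ω x₀ →
    (0 ≤ ‖gradient φ x₀‖ - f (w x₀) ∧ 0 ≤ -(hessQ φ x₀))

/-- Viscosity subsolution of `min{|∇w| − f(w), −Δ_∞ w} = 0` in `Ω`. -/
def IsFSub {n : ℕ} (Ω : Set (EuclideanSpace ℝ (Fin n))) (f : ℝ → ℝ)
    (w : EuclideanSpace ℝ (Fin n) → ℝ) : Prop :=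
  ∀ x₀ ∈ Ω, ∀ φ : EuclideanSpace ℝ (Fin n) → ℝ, ContDiff ℝ 2 φ →
    IsLocalMaxOn (fun x => w x - φ x) Ω x₀ →
    min (‖gradient φ x₀‖ - f (w x₀)) (-(hessQ φ x₀)) ≤ 0

/-- Viscosity supersolution of the transformed equation
`min{ |∇w̃| − (1−q) f(w̃^{1/(1−q)})/w̃^{q/(1−q)}, −Δ_∞ w̃ − (q/(1−q))|∇w̃|⁴/w̃ } = 0` in `U`. -/
def IsTransfSuper {n : ℕ} (U : Set (EuclideanSpace ℝ (Fin n))) (f : ℝ → ℝ) (q : ℝ)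
    (w : EuclideanSpace ℝ (Fin n) → ℝ) : Prop :=
  ∀ x₀ ∈ U, ∀ φ : EuclideanSpace ℝ (Fin n) → ℝ, ContDiff ℝ 2 φ →
    IsLocalMinOn (fun x => w x - φ x) U x₀ →
    (0 ≤ ‖gradient φ x₀‖ - (1 - q) * f (w x₀ ^ (1 / (1 - q))) / w x₀ ^ (q / (1 - q)) ∧
     0 ≤ -(hessQ φ x₀) - (q / (1 - q)) * ‖gradient φ x₀‖ ^ 4 / w x₀)

lemma my_gradient_smul {n : ℕ} {φ : EuclideanSpace ℝ (Fin n) → ℝ} (hφ : ContDiff ℝ 2 φ) (a : ℝ)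
    (x : EuclideanSpace ℝ (Fin n)) :
    gradient (fun y => a * φ y) x = a • gradient φ x := by
  have hd : DifferentiableAt ℝ φ x := (hφ.differentiable (by norm_num)).differentiableAt
  unfold gradient
  rw [show (fun y => a * φ y) = (fun y => a • φ y) from rfl, fderiv_fun_const_smul hd a, map_smul]

lemma my_hessQ_smul {n : ℕ} {φ : EuclideanSpace ℝ (Fin n) → ℝ} (hφ : ContDiff ℝ 2 φ) (a : ℝ)
    (x : EuclideanSpace ℝ (Fin n)) :
    hessQ (fun y => a * φ y) x = a ^ 3 * hessQ φ x := by
  have hφ2 : ContDiff ℝ ((2:ℕ) : ℕ∞) φ := hφ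
  have h2 : iteratedFDeriv ℝ 2 (fun y => a • φ y) x = a • iteratedFDeriv ℝ 2 φ x :=
    iteratedFDeriv_const_smul_apply' hφ2.contDiffAt
  unfold hessQ
  rw [my_gradient_smul hφ]
  rw [show (fun y => a * φ y) = (fun y => a • φ y) from rfl, h2]
  set G := gradient φ x
  have hv : ![a • G, a • G] = fun i => a • (![G, G] i) := by
    ext i; fin_cases i <;> simp
  rw [hv, ContinuousMultilinearMap.smul_apply, (iteratedFDeriv ℝ 2 φ x).map_smul_univ]
  simp [smul_eq_mul]; ring

-- rpow exponent helper
lemma my_rpow_cancel {c : ℝ} (hc : 0 < c) {q : ℝ} (hq1 : q < 1) :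
    (c ^ (1 - q)) ^ (1 / (1 - q)) = c := by
  rw [← Real.rpow_mul hc.le, mul_one_div, div_self (by linarith : (1:ℝ) - q ≠ 0), Real.rpow_one]


set_option maxHeartbeats 1000000 in
/-- The perturbations `ṽ_ε = (1+ε)(ṽ+ε)` of a supersolution `ṽ` of the
transformed equation converge uniformly to `ṽ` and, for small `ε`, are strict
supersolutions. -/
theorem strict_supersolution_perturbation {n : ℕ} (Ω : Set (EuclideanSpace ℝ (Fin n)))
    (hΩo : IsOpen Ω) (hΩb : Bornology.IsBounded Ω)
    (U : Set (EuclideanSpace ℝ (Fin n))) (hUo : IsOpen U)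
    (hUc : IsCompact (closure U)) (hUΩ : closure U ⊆ Ω)
    (q : ℝ) (hq : q ∈ Set.Ioo (0:ℝ) 1) (c : ℝ) (hc : 0 < c)
    (f : ℝ → ℝ) (hf : Continuous f)
    (hf_pos : ∀ t : ℝ, 0 < t → t < c → 0 < f t / t ^ q)
    (hf_mono : ∀ s t : ℝ, 0 < s → s ≤ t → t < c → f t / t ^ q ≤ f s / s ^ q)
    (tv : EuclideanSpace ℝ (Fin n) → ℝ)
    (htv_cont : ContinuousOn tv (closure U))
    (htv_pos : ∀ x ∈ closure U, 0 < tv x)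
    (htv_small : sSup (tv '' closure U) < c ^ (1 - q))
    (htv_super : IsTransfSuper U f q tv) :
    TendstoUniformlyOn (fun (ε : ℝ) (x : EuclideanSpace ℝ (Fin n)) => (1 + ε) * (tv x + ε))
        tv (nhdsWithin 0 (Set.Ioi 0)) (closure U) ∧
    ∃ ε₀ > (0:ℝ), ∀ ε : ℝ, 0 < ε → ε < ε₀ → ∃ C > (0:ℝ),
      sSup ((fun x => (1 + ε) * (tv x + ε)) '' closure U) < c ^ (1 - q) ∧
      ∀ x₀ ∈ U, ∀ φ : EuclideanSpace ℝ (Fin n) → ℝ, ContDiff ℝ 2 φ →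
        IsLocalMinOn (fun x => (1 + ε) * (tv x + ε) - φ x) U x₀ →
        (C ≤ ‖gradient φ x₀‖ -
            (1 - q) * f (((1 + ε) * (tv x₀ + ε)) ^ (1 / (1 - q))) /
              ((1 + ε) * (tv x₀ + ε)) ^ (q / (1 - q)) ∧
         C ≤ -(hessQ φ x₀) -
            (q / (1 - q)) * ‖gradient φ x₀‖ ^ 4 / ((1 + ε) * (tv x₀ + ε))) := by
  obtain ⟨hq0, hq1⟩ := hq
  have h1q : (0:ℝ) < 1 - q := by linarith
  set S := sSup (tv '' closure U) with hSdef
  have hbdd : BddAbove (tv '' closure U) := (hUc.image_of_continuousOn htv_cont).bddAbove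
  have hSle : ∀ x ∈ closure U, tv x ≤ S := fun x hx => le_csSup hbdd ⟨x, hx, rfl⟩
  have hS0 : 0 ≤ S := by
    rcases eq_empty_or_nonempty (closure U) with h | ⟨x, hx⟩
    · simp [hSdef, h, Real.sSup_empty]
    · exact le_trans (htv_pos x hx).le (hSle x hx)
  have hcq : 0 < c ^ (1 - q) := Real.rpow_pos_of_pos hc _
  constructor
  · -- uniform convergence
    rw [Metric.tendstoUniformlyOn_iff]
    intro η hη
    have hpos : 0 < min 1 (η / (S + 3)) := lt_min one_pos (div_pos hη (by linarith))
    filter_upwards [Ioo_mem_nhdsGT_of_mem (Set.left_mem_Ico.2 hpos)] with ε hε x hx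
    obtain ⟨hε0, hεlt⟩ := hε
    have hε1 : ε < 1 := lt_of_lt_of_le hεlt (min_le_left _ _)
    have hεη : ε * (S + 3) < η := (lt_div_iff₀ (by linarith)).1 (lt_of_lt_of_le hεlt (min_le_right _ _))
    have htx := htv_pos x hx
    have htS := hSle x hx
    rw [Real.dist_eq, abs_lt]
    constructor <;>
      nlinarith only [hεη, hε0, hε1, htx, htS, hη, mul_le_mul_of_nonneg_left htS hε0.le,
        mul_pos hε0 htx, mul_lt_mul_of_pos_left hε1 hε0]
  · -- strict supersolution
    set m := (S + c ^ (1 - q)) / 2 with hmdef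
    have hm0 : 0 < m := by rw [hmdef]; linarith
    have hmc : m < c ^ (1 - q) := by rw [hmdef]; linarith
    have hSm : S ≤ m := by rw [hmdef]; linarith
    have hα : 0 < 1 / (1 - q) := by positivity
    set T := m ^ (1 / (1 - q)) with hTdef
    have hT0 : 0 < T := Real.rpow_pos_of_pos hm0 _
    have hTc : T < c := by
      have h := Real.rpow_lt_rpow hm0.le hmc hα
      rwa [my_rpow_cancel hc hq1] at h
    have hgT : 0 < f T / T ^ q := hf_pos T hT0 hTc
    set κ := (1 - q) * (f T / T ^ q) with hκdef
    have hκ : 0 < κ := mul_pos h1q hgT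
    refine ⟨min 1 ((c ^ (1 - q) - S) / (3 + S)),
      lt_min one_pos (div_pos (by linarith) (by linarith)), ?_⟩
    intro ε hε0 hεlt
    have hε1 : ε < 1 := lt_of_lt_of_le hεlt (min_le_left _ _)
    have hεS : ε * (3 + S) < c ^ (1 - q) - S :=
      (lt_div_iff₀ (by linarith)).1 (lt_of_lt_of_le hεlt (min_le_right _ _))
    have h1ε : (0:ℝ) < 1 + ε := by linarith
    have hub : ∀ x ∈ closure U, (1 + ε) * (tv x + ε) ≤ (1 + ε) * (S + ε) := by
      intro x hx
      have hx' := hSle x hx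
      exact mul_le_mul_of_nonneg_left (by linarith) h1ε.le
    have hsupval : (1 + ε) * (S + ε) < c ^ (1 - q) := by
      nlinarith only [hεS, hε0, hε1, hS0, mul_lt_mul_of_pos_left hε1 hε0]
    have hQ : 0 < q / (1 - q) := div_pos hq0 h1q
    refine ⟨min (ε * κ) (q / (1 - q) * κ ^ 4 * ε / (2 * (S + 1) * (S + 1))),
      lt_min (mul_pos hε0 hκ)
        (div_pos (mul_pos (mul_pos hQ (pow_pos hκ 4)) hε0) (by nlinarith only [hS0])), ?_, ?_⟩
    · have hle : sSup ((fun x => (1 + ε) * (tv x + ε)) '' closure U) ≤ (1 + ε) * (S + ε) :=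
        Real.sSup_le (by rintro y ⟨x, hx, rfl⟩; exact hub x hx)
          (mul_nonneg h1ε.le (by linarith))
      linarith
    · intro x₀ hx₀ φ hφ hmin
      have hx₀' : x₀ ∈ closure U := subset_closure hx₀
      have hP : 0 < tv x₀ := htv_pos x₀ hx₀'
      have hPS : tv x₀ ≤ S := hSle x₀ hx₀'
      set a := (1 + ε)⁻¹ with hadef
      have ha : 0 < a := inv_pos.2 h1ε
      set ψ : EuclideanSpace ℝ (Fin n) → ℝ := fun y => a * φ y with hψdef
      have hψ : ContDiff ℝ 2 ψ := hφ.const_smul a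
      have hmin' : IsLocalMinOn (fun x => tv x - ψ x) U x₀ := by
        have key : ∀ y, tv y - ψ y = a * ((1 + ε) * (tv y + ε) - φ y) - ε := by
          intro y
          simp only [hψdef, hadef]
          field_simp
          ring
        have hmin0 : ∀ᶠ x in nhdsWithin x₀ U,
            (1 + ε) * (tv x₀ + ε) - φ x₀ ≤ (1 + ε) * (tv x + ε) - φ x := hmin
        show ∀ᶠ x in nhdsWithin x₀ U, tv x₀ - ψ x₀ ≤ tv x - ψ x
        filter_upwards [hmin0] with x hx
        simp only [key]
        have h6 := mul_le_mul_of_nonneg_left hx ha.le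
        linarith only [h6]
      obtain ⟨hA, hB⟩ := htv_super x₀ hx₀ ψ hψ hmin'
      have hgnorm : ‖gradient ψ x₀‖ = a * ‖gradient φ x₀‖ := by
        rw [hψdef, my_gradient_smul hφ, norm_smul, Real.norm_eq_abs, abs_of_pos ha]
      have hhess : hessQ ψ x₀ = a ^ 3 * hessQ φ x₀ := my_hessQ_smul hφ a x₀
      rw [hgnorm] at hA
      rw [hgnorm, hhess] at hB
      set t₀ := tv x₀ ^ (1 / (1 - q)) with ht₀def
      have ht₀0 : 0 < t₀ := Real.rpow_pos_of_pos hP _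
      have hβ0 : tv x₀ ^ (q / (1 - q)) = t₀ ^ q := by
        rw [ht₀def, ← Real.rpow_mul hP.le]
        congr 1
        field_simp
      rw [hβ0] at hA
      set u := (1 + ε) * (tv x₀ + ε) with hudef
      have hu0 : 0 < u := by
        rw [hudef]; exact mul_pos h1ε (by linarith)
      have htvu : tv x₀ ≤ u := by
        rw [hudef]; nlinarith only [mul_pos hε0 hP, hP, hε0]
      have huc : u < c ^ (1 - q) := lt_of_le_of_lt (hub x₀ hx₀') hsupval
      set t₁ := u ^ (1 / (1 - q)) with ht₁def
      have ht₁0 : 0 < t₁ := Real.rpow_pos_of_pos hu0 _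
      have ht₁c : t₁ < c := by
        have h := Real.rpow_lt_rpow hu0.le huc hα
        rwa [my_rpow_cancel hc hq1] at h
      have hβ1 : u ^ (q / (1 - q)) = t₁ ^ q := by
        rw [ht₁def, ← Real.rpow_mul hu0.le]
        congr 1
        field_simp
      have ht₀T : t₀ ≤ T := Real.rpow_le_rpow hP.le (le_trans hPS hSm) hα.le
      have ht₀₁ : t₀ ≤ t₁ := Real.rpow_le_rpow hP.le htvu hα.le
      have hg₀T : f T / T ^ q ≤ f t₀ / t₀ ^ q := hf_mono t₀ T ht₀0 ht₀T hTc
      have hg₁₀ : f t₁ / t₁ ^ q ≤ f t₀ / t₀ ^ q := hf_mono t₀ t₁ ht₀0 ht₀₁ ht₁c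
      have hg₀pos : 0 < f t₀ / t₀ ^ q := lt_of_lt_of_le hgT hg₀T
      -- lower bound on gradient
      have hAx : (1 - q) * (f t₀ / t₀ ^ q) ≤ a * ‖gradient φ x₀‖ := by
        rw [← mul_div_assoc]
        linarith only [hA]
      have hlb : (1 + ε) * ((1 - q) * (f t₀ / t₀ ^ q)) ≤ ‖gradient φ x₀‖ := by
        have h := mul_le_mul_of_nonneg_left hAx h1ε.le
        have e : (1 + ε) * (a * ‖gradient φ x₀‖) = ‖gradient φ x₀‖ := by
          rw [hadef]
          field_simp
        linarith only [h, e]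
      have hκφ : κ ≤ ‖gradient φ x₀‖ := by
        have s2 : κ ≤ (1 - q) * (f t₀ / t₀ ^ q) := by
          rw [hκdef]
          exact mul_le_mul_of_nonneg_left hg₀T h1q.le
        have s3 : (1 - q) * (f t₀ / t₀ ^ q) ≤ (1 + ε) * ((1 - q) * (f t₀ / t₀ ^ q)) := by
          nlinarith only [hε0, mul_pos h1q hg₀pos]
        linarith only [s2, s3, hlb]
      constructor
      · -- first inequality
        rw [hβ1]
        have h1 : (1 - q) * f t₁ / t₁ ^ q = (1 - q) * (f t₁ / t₁ ^ q) := mul_div_assoc _ _ _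
        rw [h1]
        have h2 : min (ε * κ) (q / (1 - q) * κ ^ 4 * ε / (2 * (S + 1) * (S + 1))) ≤ ε * κ :=
          min_le_left _ _
        have s1 : (1 - q) * (f t₁ / t₁ ^ q) ≤ (1 - q) * (f t₀ / t₀ ^ q) :=
          mul_le_mul_of_nonneg_left hg₁₀ h1q.le
        have s2 : ε * κ ≤ ε * ((1 - q) * (f t₀ / t₀ ^ q)) := by
          rw [hκdef]
          exact mul_le_mul_of_nonneg_left (mul_le_mul_of_nonneg_left hg₀T h1q.le) hε0.le
        nlinarith only [hlb, s1, s2, h2]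
      · -- second inequality
        set H := hessQ φ x₀
        set N := ‖gradient φ x₀‖
        have hN0 : 0 < N := lt_of_lt_of_le hκ hκφ
        have hB' : 0 ≤ -H - q / (1 - q) * N ^ 4 / ((1 + ε) * tv x₀) := by
          have h3 := mul_le_mul_of_nonneg_left hB (le_of_lt (pow_pos h1ε 3))
          have e : (1 + ε) ^ 3 * (-(a ^ 3 * H) - q / (1 - q) * (a * N) ^ 4 / tv x₀)
              = -H - q / (1 - q) * N ^ 4 / ((1 + ε) * tv x₀) := by
            rw [hadef]
            field_simp
          rw [mul_zero] at h3
          linarith only [e ▸ h3]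
        have e2 : q / (1 - q) * N ^ 4 / ((1 + ε) * tv x₀) - q / (1 - q) * N ^ 4 / u
            = q / (1 - q) * N ^ 4 * ε / ((1 + ε) * tv x₀ * (tv x₀ + ε)) := by
          rw [hudef]
          field_simp
          ring
        have hd : (1 + ε) * tv x₀ * (tv x₀ + ε) ≤ 2 * (S + 1) * (S + 1) := by
          have d1 : (1 + ε) * tv x₀ ≤ 2 * (S + 1) :=
            mul_le_mul (by linarith) (by linarith) hP.le (by norm_num)
          exact mul_le_mul d1 (by linarith) (by linarith) (by linarith)
        have hn : q / (1 - q) * κ ^ 4 * ε ≤ q / (1 - q) * N ^ 4 * ε := by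
          have h4 : κ ^ 4 ≤ N ^ 4 := pow_le_pow_left₀ hκ.le hκφ 4
          exact mul_le_mul_of_nonneg_right (mul_le_mul_of_nonneg_left h4 hQ.le) hε0.le
        have hfrac : q / (1 - q) * κ ^ 4 * ε / (2 * (S + 1) * (S + 1))
            ≤ q / (1 - q) * N ^ 4 * ε / ((1 + ε) * tv x₀ * (tv x₀ + ε)) :=
          div_le_div₀ (mul_nonneg (mul_nonneg hQ.le (pow_nonneg hN0.le 4)) hε0.le) hn
            (mul_pos (mul_pos h1ε hP) (by linarith)) hd
        have h5 : min (ε * κ) (q / (1 - q) * κ ^ 4 * ε / (2 * (S + 1) * (S + 1)))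
            ≤ q / (1 - q) * κ ^ 4 * ε / (2 * (S + 1) * (S + 1)) := min_le_right _ _
        linarith only [hB', e2, hfrac, h5]
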